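/- Let L be a countable first-order language and let K be a nonempty Fraïssé class of L-structures all of whose members are finitely generated and which has only countably many members up to isomorphism. Then there exists a countable L-structure M that is ultrahomogeneous and whose age (the class of finitely generated L-structures embeddable into M) equals K, and any two countable ultrahomogeneous L-structures with age K are isomorphic. -/

import Mathlib

open FirstOrder FirstOrder.Language Set Cardinal

universe u

namespace FraisseLimitAux

open CategoryTheory FirstOrder.Language.Structure FirstOrder.Language.Substructure

variable {L : FirstOrder.Language.{u, u}}
variable (K : Set (Bundled.{u} L.Structure)) (rep : ℕ → Bundled.{u} L.Structure)

/-- The tasks over a structure `G`: either an amalgamation task or a joint-embedding task. -/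
def Tsk (G : Type u) [L.Structure G] : Type u :=
  (Σ ij : ℕ × ℕ, ((rep ij.1 : Type u) ↪[L] G) × ((rep ij.1 : Type u) ↪[L] (rep ij.2))) ⊕ ℕ

/-- Transport of tasks along an embedding. -/
def tmap {G G' : Type u} [L.Structure G] [L.Structure G'] (ε : G ↪[L] G') :
    Tsk rep G → Tsk rep G'
  | .inl ⟨ij, f, g⟩ => .inl ⟨ij, ε.comp f, g⟩
  | .inr j => .inr j

/-- The state of the construction: a structure in `K` with a queue of pending tasks. -/
structure St where
  G : Bundled.{u} L.Structure
  hG : G ∈ K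
  q : ℕ → Option (Tsk rep G)

/-- What it means for an extension to handle a possible task. -/
def Handles {G G' : Type u} [L.Structure G] [L.Structure G'] (ε : G ↪[L] G') :
    Option (Tsk rep G) → Prop
  | none => True
  | some (.inl ⟨ij, f, g⟩) => ∃ h : (rep ij.2 : Type u) ↪[L] G', ε.comp f = h.comp g
  | some (.inr j) => Nonempty ((rep j : Type u) ↪[L] G')

variable {K rep}
variable (hK : L.IsFraisse K) (hrep : ∀ n, rep n ∈ K)
  (τ : ∀ G : Bundled.{u} L.Structure, ℕ → Option (Tsk rep G))

/-- Handle a task by amalgamation or joint embedding. -/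
noncomputable def handle {G : Bundled.{u} L.Structure} (hG : G ∈ K) :
    (t : Option (Tsk rep G)) →
      Σ' (G' : Bundled.{u} L.Structure) (_ : G' ∈ K) (ε : (G : Type u) ↪[L] G'),
        Handles rep ε t
  | none => ⟨G, hG, Embedding.refl L G, trivial⟩
  | some (.inl ⟨ij, f, g⟩) =>
      let h := hK.amalgamation (rep ij.1) G (rep ij.2) f g (hrep ij.1) hG (hrep ij.2)
      ⟨h.choose, h.choose_spec.choose_spec.choose_spec.1, h.choose_spec.choose,
        h.choose_spec.choose_spec.choose, h.choose_spec.choose_spec.choose_spec.2⟩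
  | some (.inr j) =>
      let h := hK.jointEmbedding G hG (rep j) (hrep j)
      ⟨h.choose, h.choose_spec.1, Classical.choice h.choose_spec.2.1,
        h.choose_spec.2.2⟩

/-- One step of the construction. -/
noncomputable def next (n : ℕ) (s : St K rep) :
    Σ' s' : St K rep, (s.G : Type u) ↪[L] s'.G :=
  let h := handle hK hrep s.hG (s.q n)
  ⟨⟨h.1, h.2.1, fun m =>
      if (Nat.unpair m).1 = n + 1 then τ h.1 (Nat.unpair m).2
      else Option.map (tmap rep h.2.2.1) (s.q m)⟩, h.2.2.1⟩

/-- The initial state. -/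
noncomputable def init : St K rep :=
  ⟨rep 0, hrep 0, fun m =>
    if (Nat.unpair m).1 = 0 then τ (rep 0) (Nat.unpair m).2 else none⟩

/-- The chain of structures. -/
noncomputable def chain (n : ℕ) : St K rep :=
  Nat.rec (init hrep τ) (fun n s => (next hK hrep τ n s).1) n

/-- The successive embeddings in the chain. -/
noncomputable def e (n : ℕ) :
    ((chain hK hrep τ n).G : Type u) ↪[L] (chain hK hrep τ (n + 1)).G :=
  (next hK hrep τ n (chain hK hrep τ n)).2

/-- The composite embeddings in the chain. -/
noncomputable def cmap (m n : ℕ) (h : m ≤ n) :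
    ((chain hK hrep τ m).G : Type u) ↪[L] (chain hK hrep τ n).G :=
  DirectedSystem.natLERec (e hK hrep τ) m n h

instance : DirectedSystem (fun n => ((chain hK hrep τ n).G : Type u))
    (fun i j h => cmap hK hrep τ i j h) :=
  DirectedSystem.natLERec.directedSystem _

lemma chain_succ_q (n m : ℕ) :
    (chain hK hrep τ (n + 1)).q m =
      if (Nat.unpair m).1 = n + 1 then τ (chain hK hrep τ (n + 1)).G (Nat.unpair m).2
      else Option.map (tmap rep (e hK hrep τ n)) ((chain hK hrep τ n).q m) := rfl

lemma e_handles (m : ℕ) :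
    Handles rep (e hK hrep τ m) ((chain hK hrep τ m).q m) :=
  (handle hK hrep (chain hK hrep τ m).hG ((chain hK hrep τ m).q m)).2.2.2


lemma cmap_self (m : ℕ) (x : ((chain hK hrep τ m).G : Type u)) :
    cmap hK hrep τ m m le_rfl x = x :=
  FirstOrder.Language.DirectedSystem.map_self (fun i j h => cmap hK hrep τ i j h) x

lemma cmap_cmap {i j k : ℕ} (hij : i ≤ j) (hjk : j ≤ k)
    (x : ((chain hK hrep τ i).G : Type u)) :
    cmap hK hrep τ j k hjk (cmap hK hrep τ i j hij x) = cmap hK hrep τ i k (hij.trans hjk) x :=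
  FirstOrder.Language.DirectedSystem.map_map (fun i j h => cmap hK hrep τ i j h) hij hjk x

lemma cmap_succ (n : ℕ) (x : ((chain hK hrep τ n).G : Type u)) :
    cmap hK hrep τ n (n + 1) (Nat.le_succ n) x = e hK hrep τ n x := by
  have h := congrFun (DirectedSystem.coe_natLERec (e hK hrep τ) n (n + 1) (Nat.le_succ n)) x
  exact h.trans (@Nat.leRecOn_succ' (fun k => ((chain hK hrep τ k).G : Type u)) n (Nat.le_succ n) (fun {k} => ⇑(e hK hrep τ k)) x)

lemma tmap_refl {G : Type u} [L.Structure G] (t : Tsk rep G) :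
    tmap rep (Embedding.refl L G) t = t := by
  cases t with
  | inl x => obtain ⟨ij, f, g⟩ := x; simp [tmap, Embedding.refl_comp]; rfl
  | inr j => rfl

lemma tmap_tmap {G G' G'' : Type u} [L.Structure G] [L.Structure G'] [L.Structure G'']
    (ε : G ↪[L] G') (ε' : G' ↪[L] G'') (t : Tsk rep G) :
    tmap rep ε' (tmap rep ε t) = tmap rep (ε'.comp ε) t := by
  cases t with
  | inl x => rfl
  | inr j => rfl

lemma cmap_self_eq_refl (m : ℕ) :
    cmap hK hrep τ m m le_rfl = Embedding.refl L _ := by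
  ext x; exact cmap_self hK hrep τ m x

lemma e_comp_cmap (s n : ℕ) (hsn : s ≤ n) :
    (e hK hrep τ n).comp (cmap hK hrep τ s n hsn) =
      cmap hK hrep τ s (n + 1) (hsn.trans (Nat.le_succ n)) := by
  ext x
  rw [Embedding.comp_apply, ← cmap_succ, cmap_cmap]

lemma chain_q (s k : ℕ) :
    ∀ n (hsn : s ≤ n), n ≤ Nat.pair s k →
    (chain hK hrep τ n).q (Nat.pair s k) =
      Option.map (tmap rep (cmap hK hrep τ s n hsn)) (τ (chain hK hrep τ s).G k) := by
  intro n hsn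
  induction n, hsn using Nat.le_induction with
  | base =>
    intro _
    have hbase : (chain hK hrep τ s).q (Nat.pair s k) = τ (chain hK hrep τ s).G k := by
      cases s with
      | zero =>
        show (if (Nat.unpair (Nat.pair 0 k)).1 = 0 then
          τ (rep 0) (Nat.unpair (Nat.pair 0 k)).2 else none) = _
        simp [Nat.unpair_pair]
        rfl
      | succ s' =>
        rw [chain_succ_q]
        simp [Nat.unpair_pair]
    rw [hbase, cmap_self_eq_refl]
    cases ht : τ (chain hK hrep τ s).G k with
    | none => rfl
    | some t => simp [tmap_refl]
  | succ n hsn ih =>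
    intro hn
    rw [chain_succ_q]
    have h1 : (Nat.unpair (Nat.pair s k)).1 = s := by simp [Nat.unpair_pair]
    rw [if_neg (by omega)]
    rw [ih (le_trans (Nat.le_succ n) hn)]
    cases ht : τ (chain hK hrep τ s).G k with
    | none => rfl
    | some t =>
      simp only [Option.map_some]
      rw [tmap_tmap, e_comp_cmap]

lemma task_handled (s k : ℕ) (t : Tsk rep ((chain hK hrep τ s).G : Type u))
    (ht : τ (chain hK hrep τ s).G k = some t) :
    Handles rep (e hK hrep τ (Nat.pair s k))
      (some (tmap rep (cmap hK hrep τ s (Nat.pair s k) (Nat.left_le_pair s k)) t)) := by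
  have h1 := chain_q hK hrep τ s k (Nat.pair s k) (Nat.left_le_pair s k) le_rfl
  rw [ht] at h1
  have h2 := e_handles hK hrep τ (Nat.pair s k)
  rw [h1] at h2
  exact h2

end FraisseLimitAux

namespace FraisseLimitAux
open CategoryTheory FirstOrder.Language.Structure FirstOrder.Language.Substructure

variable {L : FirstOrder.Language.{u, u}}

theorem exists_limit [Countable (Σ l, L.Functions l)] {K : Set (Bundled.{u} L.Structure)}
    (hK : L.IsFraisse K) :
    ∃ M : Bundled.{u} L.Structure, Countable M ∧ L.IsUltrahomogeneous M ∧ L.age M = K := by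
  classical
  -- set of representatives
  obtain ⟨F, hF⟩ := hK.is_essentially_countable.exists_eq_range (hK.is_nonempty.image _)
  have hrep : ∀ n, (F n).out ∈ K := by
    intro n
    have : F n ∈ Quotient.mk' '' K := hF ▸ mem_range_self n
    obtain ⟨A, hA, hA2⟩ := this
    have : A ≈ (F n).out := Quotient.mk_eq_iff_out.1 hA2
    exact (IsFraisse.is_equiv_invariant (h := hK) this).1 hA
  set rep : ℕ → Bundled.{u} L.Structure := fun n => (F n).out with hrepdef
  have hrep2 : ∀ B ∈ K, ∃ n, Nonempty ((B : Type u) ≃[L] (rep n : Type u)) := by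
    intro B hB
    have : Quotient.mk' B ∈ range F := hF ▸ mem_image_of_mem _ hB
    obtain ⟨n, hn⟩ := this
    exact ⟨n, Quotient.mk_eq_iff_out.1 hn.symm⟩
  have hcarr : ∀ G : Bundled.{u} L.Structure, G ∈ K → Countable G := fun G hG =>
    Structure.cg_iff_countable.1 (hK.FG G hG).cg
  -- enumerations of tasks
  have hτ : ∀ G : Bundled.{u} L.Structure, ∃ τG : ℕ → Option (Tsk rep G),
      Countable G → ∀ t : Tsk rep G, ∃ k, τG k = some t := by
    intro G
    by_cases hcG : Countable G
    · haveI := hcG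
      haveI : ∀ i, Countable ((rep i : Type u) ↪[L] G) := fun i =>
        Structure.FG.countable_embedding _ (hK.FG _ (hrep i))
      haveI : ∀ j, Countable (rep j : Type u) := fun j => hcarr _ (hrep j)
      haveI : ∀ i j, Countable ((rep i : Type u) ↪[L] (rep j : Type u)) := fun i j =>
        Structure.FG.countable_embedding _ (hK.FG _ (hrep i))
      haveI : Countable (Tsk rep (G : Type u)) := by
        have : Countable ((Σ ij : ℕ × ℕ, ((rep ij.1 : Type u) ↪[L] G) ×
            ((rep ij.1 : Type u) ↪[L] (rep ij.2))) ⊕ ℕ) := inferInstance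
        exact this
      obtain ⟨f, hf⟩ := Countable.exists_injective_nat (Tsk rep (G : Type u))
      exact ⟨Function.partialInv f, fun _ t => ⟨f t, Function.partialInv_left hf t⟩⟩
    · exact ⟨fun _ => none, fun h => absurd h hcG⟩
  choose τ hτ using hτ
  -- the direct limit
  let G' : ℕ → Type u := fun n => (chain hK hrep τ n).G
  let f : ∀ i j, i ≤ j → G' i ↪[L] G' j := fun i j h => cmap hK hrep τ i j h
  haveI : DirectedSystem G' (fun i j h => f i j h) :=
    DirectedSystem.natLERec.directedSystem _
  let M : Type u := FirstOrder.Language.DirectLimit G' f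
  have hage : L.age M = K := by
    refine (age_directLimit G' f).trans (subset_antisymm
      (iUnion_subset fun n => hK.hereditary _ (chain hK hrep τ n).hG) fun B hB => ?_)
    obtain ⟨j, ⟨eb⟩⟩ := hrep2 B hB
    obtain ⟨k, hk⟩ := hτ _ (hcarr _ (chain hK hrep τ 0).hG) (Sum.inr j)
    have hh := task_handled hK hrep τ 0 k (Sum.inr j) hk
    obtain ⟨em⟩ := hh
    exact mem_iUnion_of_mem (Nat.pair 0 k + 1) ⟨hK.FG B hB, ⟨em.comp eb.toEmbedding⟩⟩
  have hMcg : Structure.CG L M := DirectLimit.cg _ (fun n => (hK.FG _ (chain hK hrep τ n).hG).cg)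
  haveI hMcount : Countable M := Structure.cg_iff_countable.1 hMcg
  -- richness
  have rich : ∀ (A B : Bundled.{u} L.Structure), A ∈ K → B ∈ K →
      ∀ (p : (A : Type u) ↪[L] M) (g : (A : Type u) ↪[L] (B : Type u)),
      ∃ h : (B : Type u) ↪[L] M, h.comp g = p := by
    intro A B hA hB p g
    obtain ⟨a, ⟨ea⟩⟩ := hrep2 A hA
    obtain ⟨b, ⟨eb⟩⟩ := hrep2 B hB
    set p' : (rep a : Type u) ↪[L] M := p.comp ea.symm.toEmbedding with hp'
    have hfg : p'.toHom.range.FG := (hK.FG _ (hrep a)).range p'.toHom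
    obtain ⟨s, T, hT⟩ := DirectLimit.exists_fg_substructure_in_Sigma (L := L) (G := G') (f := f) p'.toHom.range hfg
    have hsub : ∀ c, p' c ∈ (DirectLimit.of L ℕ G' f s).toHom.range := by
      intro c
      have h1 : p' c ∈ p'.toHom.range := Hom.mem_range.2 ⟨c, rfl⟩
      rw [← hT] at h1
      obtain ⟨y, -, hy⟩ := h1
      exact Hom.mem_range.2 ⟨y, hy⟩
    set p'' : (rep a : Type u) ↪[L] (DirectLimit.of L ℕ G' f s).toHom.range :=
      p'.codRestrict _ hsub with hp''
    set f0 : (rep a : Type u) ↪[L] G' s :=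
      ((DirectLimit.of L ℕ G' f s).equivRange.symm.toEmbedding).comp p'' with hf0def
    have hf0 : ∀ x, DirectLimit.of L ℕ G' f s (f0 x) = p' x := by
      intro x
      have h1 : (DirectLimit.of L ℕ G' f s).equivRange (f0 x) = p'' x := by
        simp [hf0def]
      have h2 := congrArg Subtype.val h1
      exact h2
    set g0 : (rep a : Type u) ↪[L] (rep b : Type u) :=
      eb.toEmbedding.comp (g.comp ea.symm.toEmbedding) with hg0
    obtain ⟨k, hk⟩ := hτ _ (hcarr _ (chain hK hrep τ s).hG) (Sum.inl ⟨(a, b), f0, g0⟩)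
    have hh := task_handled hK hrep τ s k (Sum.inl ⟨(a, b), f0, g0⟩) hk
    obtain ⟨h₀, hcomm⟩ := hh
    refine ⟨((DirectLimit.of L ℕ G' f (Nat.pair s k + 1)).comp h₀).comp eb.toEmbedding, ?_⟩
    ext x
    have hx1 : eb (g x) = g0 (ea x) := by simp [hg0]
    have hx2 := congrFun (congrArg (DFunLike.coe ∘ Embedding.toHom) hcomm) (ea x)
    simp only [Function.comp_apply, Embedding.coe_toHom, Embedding.comp_apply] at hx2
    have hx3 : DirectLimit.of L ℕ G' f (Nat.pair s k + 1)
        (e hK hrep τ (Nat.pair s k) (cmap hK hrep τ s (Nat.pair s k)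
          (Nat.left_le_pair s k) (f0 (ea x)))) = DirectLimit.of L ℕ G' f s (f0 (ea x)) := by
      rw [← cmap_succ]
      exact (DirectLimit.of_f (L := L) (G := G') (f := f)).trans
        (DirectLimit.of_f (L := L) (G := G') (f := f))
    calc ((DirectLimit.of L ℕ G' f (Nat.pair s k + 1)).comp h₀).comp eb.toEmbedding (g x)
        = DirectLimit.of L ℕ G' f (Nat.pair s k + 1) (h₀ (g0 (ea x))) := by
          simp [Embedding.comp_apply, hx1]
          rfl
      _ = DirectLimit.of L ℕ G' f (Nat.pair s k + 1)
            (e hK hrep τ (Nat.pair s k) (cmap hK hrep τ s (Nat.pair s k)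
              (Nat.left_le_pair s k) (f0 (ea x)))) := by rw [← hx2]
      _ = DirectLimit.of L ℕ G' f s (f0 (ea x)) := hx3
      _ = p' (ea x) := hf0 (ea x)
      _ = p x := by simp [hp']
  -- ultrahomogeneity via extension pairs
  have hext : L.IsExtensionPair M M := by
    rintro ⟨φ, φfg⟩ m
    let S := φ.dom ⊔ Substructure.closure L {m}
    have S_FG : S.FG := φfg.sup (Substructure.fg_closure_singleton _)
    have hage' := Set.ext_iff.1 hage
    have hSK : (Bundled.of (S : Type u) : Bundled.{u} L.Structure) ∈ K :=
      (hage' _).1 ⟨(Substructure.fg_iff_structure_fg S).1 S_FG, ⟨Substructure.subtype _⟩⟩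
    have hAK : (Bundled.of (φ.dom : Type u) : Bundled.{u} L.Structure) ∈ K :=
      (hage' _).1 ⟨(Substructure.fg_iff_structure_fg φ.dom).1 φfg, ⟨Substructure.subtype _⟩⟩
    obtain ⟨h, hcomp⟩ := rich (Bundled.of (φ.dom : Type u)) (Bundled.of (S : Type u)) hAK hSK
      ((Substructure.subtype φ.cod).comp φ.toEquiv.toEmbedding)
      (Substructure.inclusion le_sup_left)
    refine ⟨⟨⟨S, h.toHom.range, h.equivRange⟩, S_FG⟩,
      Substructure.subset_closure.trans (le_sup_right : _ ≤ S) (mem_singleton m),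
      ⟨le_sup_left, ?_⟩⟩
    ext x
    simp only [Subtype.mk_le_mk, PartialEquiv.le_def, ← hcomp, Embedding.comp_apply]
    exact DFunLike.congr_fun hcomp x
  have huh : L.IsUltrahomogeneous M := (isUltrahomogeneous_iff_IsExtensionPair hMcg).2 hext
  exact ⟨Bundled.of M, hMcount, huh, hage⟩

end FraisseLimitAux

/-- If `L` is a countable language and `K` is a nonempty Fraïssé class of
finitely generated `L`-structures with only countably many members up to isomorphism, then
there is a countable ultrahomogeneous `L`-structure whose age is `K` (a Fraïssé limit), and
any two countable ultrahomogeneous structures with age `K` are isomorphic. -/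
theorem fraisse_limit_exists_unique {L : FirstOrder.Language.{u, u}}
    (hL : L.card ≤ ℵ₀) (K : Set (CategoryTheory.Bundled.{u} L.Structure))
    (hK : L.IsFraisse K) :
    (∃ M : CategoryTheory.Bundled.{u} L.Structure,
        Countable M ∧ L.IsUltrahomogeneous M ∧ L.age M = K) ∧
      ∀ M N : CategoryTheory.Bundled.{u} L.Structure,
        Countable M → Countable N →
        L.IsUltrahomogeneous M → L.IsUltrahomogeneous N →
        L.age M = K → L.age N = K → Nonempty (M ≃[L] N) := by
  haveI : Countable L.Symbols := Cardinal.mk_le_aleph0_iff.1 hL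
  haveI : Countable (Σ l, L.Functions l) := inferInstance
  constructor
  · exact FraisseLimitAux.exists_limit hK
  · intro M N hMc hNc hMu hNu hMa hNa
    haveI : Countable (M : Type u) := hMc
    haveI : Countable (N : Type u) := hNc
    exact IsFraisseLimit.nonempty_equiv (K := K) ⟨hMu, hMa⟩ ⟨hNu, hNa⟩
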